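/- Let f: S → S̄ be an isometry and suppose a curve with parameter functions (u(s), v(s)) has position vector in the tangent plane on both S and S̄, with the same coefficient functions λ, μ (with μ ≠ 0 and nondegenerate denominators). Then the second fundamental form coefficients satisfy u'²(LM̄ − L̄M) + v'²(MN̄ − M̄N) + u'v'(LN̄ − L̄N) = 0 along the curve. -/

import Mathlib

noncomputable section

/-- Euclidean dot product on `ℝ³`. -/
def dot (a b : Fin 3 → ℝ) : ℝ := ∑ i, a i * b i

lemma dot_add_left (a b n : Fin 3 → ℝ) : dot (a + b) n = dot a n + dot b n := by
  simp [dot, add_mul, Finset.sum_add_distrib]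

lemma dot_smul_left (r : ℝ) (a n : Fin 3 → ℝ) : dot (r • a) n = r * dot a n := by
  simp [dot, Finset.mul_sum, mul_assoc]

lemma key (φu φv N : ℝ × ℝ → Fin 3 → ℝ)
    (G1 G2 L G3 G4 M G5 G6 N₂ : ℝ × ℝ → ℝ)
    (lam mu u v : ℝ → ℝ) (c : ℝ → ℝ × ℝ)
    (hdu : Differentiable ℝ φu) (hdv : Differentiable ℝ φv)
    (hlam : Differentiable ℝ lam) (hmu : Differentiable ℝ mu)
    (huu : Differentiable ℝ u) (hvv : Differentiable ℝ v)
    (hc : c = fun s => (u s, v s))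
    (hgauss_uu : ∀ p, fderiv ℝ φu p (1, 0) = G1 p • φu p + G2 p • φv p + L p • N p)
    (hgauss_uv : ∀ p, fderiv ℝ φu p (0, 1) = G3 p • φu p + G4 p • φv p + M p • N p)
    (hgauss_vu : ∀ p, fderiv ℝ φv p (1, 0) = G3 p • φu p + G4 p • φv p + M p • N p)
    (hgauss_vv : ∀ p, fderiv ℝ φv p (0, 1) = G5 p • φu p + G6 p • φv p + N₂ p • N p)
    (hNunit : ∀ p, dot (N p) (N p) = 1)
    (hNu : ∀ p, dot (N p) (φu p) = 0)
    (hNv : ∀ p, dot (N p) (φv p) = 0) (s : ℝ) :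
    dot (deriv (fun s => lam s • φu (c s) + mu s • φv (c s)) s) (N (c s))
      = lam s * (deriv u s * L (c s) + deriv v s * M (c s))
        + mu s * (deriv u s * M (c s) + deriv v s * N₂ (c s)) := by
  have hcd : HasDerivAt c (deriv u s, deriv v s) s := by
    rw [hc]; exact (HasDerivAt.prodMk (huu s).hasDerivAt (hvv s).hasDerivAt)
  have h1 : HasDerivAt (fun t => φu (c t)) (fderiv ℝ φu (c s) (deriv u s, deriv v s)) s :=
    (hdu (c s)).hasFDerivAt.comp_hasDerivAt s hcd
  have h2 : HasDerivAt (fun t => φv (c t)) (fderiv ℝ φv (c s) (deriv u s, deriv v s)) s :=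
    (hdv (c s)).hasFDerivAt.comp_hasDerivAt s hcd
  have hγd : HasDerivAt (fun s => lam s • φu (c s) + mu s • φv (c s)) _ s :=
    (((hlam s).hasDerivAt.smul h1).add ((hmu s).hasDerivAt.smul h2))
  rw [hγd.deriv]
  have hsplit : ((deriv u s, deriv v s) : ℝ × ℝ)
      = deriv u s • ((1:ℝ), (0:ℝ)) + deriv v s • ((0:ℝ), (1:ℝ)) := by
    simp [Prod.ext_iff]
  have hu' : fderiv ℝ φu (c s) (deriv u s, deriv v s)
      = deriv u s • fderiv ℝ φu (c s) (1, 0) + deriv v s • fderiv ℝ φu (c s) (0, 1) := by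
    rw [hsplit, map_add, map_smul, map_smul]
  have hv' : fderiv ℝ φv (c s) (deriv u s, deriv v s)
      = deriv u s • fderiv ℝ φv (c s) (1, 0) + deriv v s • fderiv ℝ φv (c s) (0, 1) := by
    rw [hsplit, map_add, map_smul, map_smul]
  rw [hu', hv', hgauss_uu, hgauss_uv, hgauss_vu, hgauss_vv]
  have hcomm : ∀ (n a : Fin 3 → ℝ), dot a n = dot n a := by
    intro n a; simp [dot, mul_comm]
  have hNu' : ∀ p, dot (φu p) (N p) = 0 := fun p => by rw [hcomm]; exact hNu p
  have hNv' : ∀ p, dot (φv p) (N p) = 0 := fun p => by rw [hcomm]; exact hNv p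
  simp only [smul_add, dot_add_left, dot_smul_left, smul_smul, hNu', hNv', hNunit]
  ring

/-- if a curve with parameter functions `(u(s), v(s))` has its
position vector in the tangent plane on both `S` and `S̄` with the same
coefficient functions `λ, μ` (with `μ ≠ 0` and nondegenerate denominators),
then the second fundamental form coefficients satisfy
`u'²(LM̄ − L̄M) + v'²(MN̄ − M̄N) + u'v'(LN̄ − L̄N) = 0` along the curve. -/
theorem second_fundamental_form_relation
    (φu φv N φbu φbv Nbar : ℝ × ℝ → Fin 3 → ℝ)
    (Γ111 Γ211 Γ112 Γ212 Γ122 Γ222 L M N₂ : ℝ × ℝ → ℝ)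
    (Γb111 Γb211 Γb112 Γb212 Γb122 Γb222 Lb Mb Nb₂ : ℝ × ℝ → ℝ)
    (lam mu u v : ℝ → ℝ) (γ γbar : ℝ → Fin 3 → ℝ) (c : ℝ → ℝ × ℝ)
    (hdu : Differentiable ℝ φu) (hdv : Differentiable ℝ φv)
    (hdbu : Differentiable ℝ φbu) (hdbv : Differentiable ℝ φbv)
    (hlam : Differentiable ℝ lam) (hmu : Differentiable ℝ mu)
    (huu : Differentiable ℝ u) (hvv : Differentiable ℝ v)
    (hc : c = fun s => (u s, v s))
    (hγ : γ = fun s => lam s • φu (c s) + mu s • φv (c s))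
    (hγbar : γbar = fun s => lam s • φbu (c s) + mu s • φbv (c s))
    -- Gauss equations on S
    (hgauss_uu : ∀ p, fderiv ℝ φu p (1, 0) = Γ111 p • φu p + Γ211 p • φv p + L p • N p)
    (hgauss_uv : ∀ p, fderiv ℝ φu p (0, 1) = Γ112 p • φu p + Γ212 p • φv p + M p • N p)
    (hgauss_vu : ∀ p, fderiv ℝ φv p (1, 0) = Γ112 p • φu p + Γ212 p • φv p + M p • N p)
    (hgauss_vv : ∀ p, fderiv ℝ φv p (0, 1) = Γ122 p • φu p + Γ222 p • φv p + N₂ p • N p)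
    (hNunit : ∀ p, dot (N p) (N p) = 1)
    (hNu : ∀ p, dot (N p) (φu p) = 0)
    (hNv : ∀ p, dot (N p) (φv p) = 0)
    -- Gauss equations on S̄
    (hbgauss_uu : ∀ p, fderiv ℝ φbu p (1, 0) = Γb111 p • φbu p + Γb211 p • φbv p + Lb p • Nbar p)
    (hbgauss_uv : ∀ p, fderiv ℝ φbu p (0, 1) = Γb112 p • φbu p + Γb212 p • φbv p + Mb p • Nbar p)
    (hbgauss_vu : ∀ p, fderiv ℝ φbv p (1, 0) = Γb112 p • φbu p + Γb212 p • φbv p + Mb p • Nbar p)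
    (hbgauss_vv : ∀ p, fderiv ℝ φbv p (0, 1) = Γb122 p • φbu p + Γb222 p • φbv p + Nb₂ p • Nbar p)
    (hNbunit : ∀ p, dot (Nbar p) (Nbar p) = 1)
    (hNbu : ∀ p, dot (Nbar p) (φbu p) = 0)
    (hNbv : ∀ p, dot (Nbar p) (φbv p) = 0)
    -- position vectors lie in the tangent planes: the velocities are tangent
    (htangent : ∀ s, dot (deriv γ s) (N (c s)) = 0)
    (htangentbar : ∀ s, dot (deriv γbar s) (Nbar (c s)) = 0)
    (hmu0 : ∀ s, mu s ≠ 0)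
    (hden : ∀ s, deriv u s * M (c s) + deriv v s * N₂ (c s) ≠ 0)
    (hdenbar : ∀ s, deriv u s * Mb (c s) + deriv v s * Nb₂ (c s) ≠ 0) :
    ∀ s, (deriv u s) ^ 2 * (L (c s) * Mb (c s) - Lb (c s) * M (c s))
        + (deriv v s) ^ 2 * (M (c s) * Nb₂ (c s) - Mb (c s) * N₂ (c s))
        + deriv u s * deriv v s * (L (c s) * Nb₂ (c s) - Lb (c s) * N₂ (c s)) = 0 := by
  intro s
  have hA := key φu φv N Γ111 Γ211 L Γ112 Γ212 M Γ122 Γ222 N₂ lam mu u v c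
    hdu hdv hlam hmu huu hvv hc hgauss_uu hgauss_uv hgauss_vu hgauss_vv hNunit hNu hNv s
  have hAb := key φbu φbv Nbar Γb111 Γb211 Lb Γb112 Γb212 Mb Γb122 Γb222 Nb₂ lam mu u v c
    hdbu hdbv hlam hmu huu hvv hc hbgauss_uu hbgauss_uv hbgauss_vu hbgauss_vv hNbunit hNbu hNbv s
  rw [← hγ] at hA
  rw [← hγbar] at hAb
  have e1 : lam s * (deriv u s * L (c s) + deriv v s * M (c s))
      + mu s * (deriv u s * M (c s) + deriv v s * N₂ (c s)) = 0 := by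
    rw [← hA]; exact htangent s
  have e2 : lam s * (deriv u s * Lb (c s) + deriv v s * Mb (c s))
      + mu s * (deriv u s * Mb (c s) + deriv v s * Nb₂ (c s)) = 0 := by
    rw [← hAb]; exact htangentbar s
  have hlam0 : lam s ≠ 0 := by
    intro h
    apply hden s
    have := e1
    rw [h] at this
    simpa [hmu0 s] using this
  have hz : lam s * ((deriv u s * L (c s) + deriv v s * M (c s))
        * (deriv u s * Mb (c s) + deriv v s * Nb₂ (c s))
      - (deriv u s * Lb (c s) + deriv v s * Mb (c s))
        * (deriv u s * M (c s) + deriv v s * N₂ (c s))) = 0 := by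
    linear_combination (deriv u s * Mb (c s) + deriv v s * Nb₂ (c s)) * e1
      - (deriv u s * M (c s) + deriv v s * N₂ (c s)) * e2
  have h := (mul_eq_zero.mp hz).resolve_left hlam0
  linear_combination h
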